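/- arXiv:1509.07683 — 5 statements merged into one kernel-verified Lean document; each statement's English description precedes it below -/
import Mathlib

section
/- Let A and B be positive real numbers. For each nonzero integer k define S_k = ∑_{n ∈ ℤ} (A·n² + B·k²)^{-3/2}. Then k²·S_k tends to 2/(B·√A) as the integer k tends to +∞. -/
open Filter Real

variable {A C : ℝ}


private lemma hasDerivAt_G (hA : 0 < A) (hC : 0 < C) (x : ℝ) :
    HasDerivAt (fun x : ℝ => x * (A * x ^ 2 + C) ^ (-(1/2) : ℝ) / C)
      ((A * x ^ 2 + C) ^ (-(3/2) : ℝ)) x := by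
  have hy : 0 < A * x ^ 2 + C := by positivity
  have h1 : HasDerivAt (fun x : ℝ => A * x ^ 2 + C) (A * (2 * x ^ 1)) x :=
    ((hasDerivAt_pow 2 x).const_mul A).add_const C
  have h2 := h1.rpow_const (p := (-(1/2) : ℝ)) (Or.inl hy.ne')
  have h3 := ((hasDerivAt_id x).mul h2).div_const C
  convert h3 using 1
  case e'_4 => rfl
  case e'_5 => rfl
  case e'_8 => rfl
  have e1 : (A * x ^ 2 + C) ^ (-(1/2) : ℝ)
      = (A * x ^ 2 + C) * (A * x ^ 2 + C) ^ (-(3/2) : ℝ) := by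
    rw [show (-(1/2) : ℝ) = 1 + (-(3/2)) by norm_num, Real.rpow_add hy, Real.rpow_one]
  have e2 : (-(1/2) : ℝ) - 1 = (-(3/2) : ℝ) := by norm_num
  rw [e2, e1]
  simp only [id]
  field_simp
  ring

private lemma f_anti (hA : 0 < A) (hC : 0 < C) {s t : ℝ} (hs : 0 ≤ s) (hst : s ≤ t) :
    (A * t ^ 2 + C) ^ (-(3/2) : ℝ) ≤ (A * s ^ 2 + C) ^ (-(3/2) : ℝ) := by
  apply Real.rpow_le_rpow_of_nonpos (by positivity)
  · have : s ^ 2 ≤ t ^ 2 := pow_le_pow_left₀ hs hst 2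
    nlinarith [hA.le]
  · norm_num

private lemma step_bounds (hA : 0 < A) (hC : 0 < C) (n : ℕ) :
    (A * ((n : ℝ) + 1) ^ 2 + C) ^ (-(3/2) : ℝ)
      ≤ ((n : ℝ) + 1) * (A * ((n : ℝ) + 1) ^ 2 + C) ^ (-(1/2) : ℝ) / C
        - (n : ℝ) * (A * (n : ℝ) ^ 2 + C) ^ (-(1/2) : ℝ) / C
    ∧ ((n : ℝ) + 1) * (A * ((n : ℝ) + 1) ^ 2 + C) ^ (-(1/2) : ℝ) / C
        - (n : ℝ) * (A * (n : ℝ) ^ 2 + C) ^ (-(1/2) : ℝ) / C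
      ≤ (A * (n : ℝ) ^ 2 + C) ^ (-(3/2) : ℝ) := by
  set G : ℝ → ℝ := fun x => x * (A * x ^ 2 + C) ^ (-(1/2) : ℝ) / C with hGdef
  set f : ℝ → ℝ := fun x => (A * x ^ 2 + C) ^ (-(3/2) : ℝ) with hfdef
  have hab : (n : ℝ) < (n : ℝ) + 1 := by linarith
  obtain ⟨c, hc, heq⟩ := exists_hasDerivAt_eq_slope G f hab
    (fun x _ => (hasDerivAt_G hA hC x).continuousAt.continuousWithinAt)
    (fun x _ => hasDerivAt_G hA hC x)
  have hGc : G ((n : ℝ) + 1) - G n = f c := by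
    rw [heq]; simp
  constructor
  · have : f ((n : ℝ) + 1) ≤ f c := f_anti hA hC ((n.cast_nonneg).trans hc.1.le) hc.2.le
    calc f ((n:ℝ)+1) ≤ f c := this
      _ = _ := by rw [← hGc]
  · have : f c ≤ f n := f_anti hA hC (n.cast_nonneg) hc.1.le
    calc G ((n:ℝ)+1) - G n = f c := hGc
      _ ≤ f n := this

private lemma G_le_L (hA : 0 < A) (hC : 0 < C) {x : ℝ} (hx : 0 ≤ x) :
    x * (A * x ^ 2 + C) ^ (-(1/2) : ℝ) / C ≤ A ^ (-(1/2) : ℝ) / C := by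
  rcases eq_or_lt_of_le hx with h | hx'
  · rw [← h]; simp; positivity
  · have hy : (0:ℝ) < A * x ^ 2 + C := by positivity
    have key : (A * x ^ 2 + C) ^ (-(1/2) : ℝ) ≤ (A * x ^ 2) ^ (-(1/2) : ℝ) :=
      Real.rpow_le_rpow_of_nonpos (by positivity) (by linarith) (by norm_num)
    have e : (A * x ^ 2) ^ (-(1/2) : ℝ) = A ^ (-(1/2) : ℝ) * x⁻¹ := by
      rw [Real.mul_rpow hA.le (by positivity)]
      congr 1
      rw [← Real.rpow_natCast x 2, ← Real.rpow_mul hx]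
      norm_num [Real.rpow_neg_one]
    rw [div_le_div_iff_of_pos_right hC]
    calc x * (A * x ^ 2 + C) ^ (-(1/2) : ℝ) ≤ x * (A ^ (-(1/2) : ℝ) * x⁻¹) := by
          rw [← e]; exact mul_le_mul_of_nonneg_left key hx
      _ = A ^ (-(1/2) : ℝ) := by field_simp

private lemma G_tendsto (hA : 0 < A) (hC : 0 < C) :
    Tendsto (fun N : ℕ => (N : ℝ) * (A * (N : ℝ) ^ 2 + C) ^ (-(1/2) : ℝ) / C)
      atTop (nhds (A ^ (-(1/2) : ℝ) / C)) := by
  have h0 : Tendsto (fun N : ℕ => A + C / (N : ℝ) ^ 2) atTop (nhds A) := by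
    have : Tendsto (fun N : ℕ => C / (N : ℝ) ^ 2) atTop (nhds 0) :=
      tendsto_const_nhds.div_atTop
        ((tendsto_pow_atTop two_ne_zero).comp tendsto_natCast_atTop_atTop)
    simpa using tendsto_const_nhds.add this
  have hcont : ContinuousAt (fun y : ℝ => y ^ (-(1/2) : ℝ)) A :=
    Real.continuousAt_rpow_const A _ (Or.inl hA.ne')
  have h1 : Tendsto (fun N : ℕ => (A + C / (N : ℝ) ^ 2) ^ (-(1/2) : ℝ) / C)
      atTop (nhds (A ^ (-(1/2) : ℝ) / C)) := ((hcont.tendsto.comp h0).div_const C)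
  apply h1.congr'
  filter_upwards [eventually_ge_atTop 1] with N hN
  have hx : (0:ℝ) < (N : ℝ) := by exact_mod_cast hN
  have hsplit : A * (N : ℝ) ^ 2 + C = (N : ℝ) ^ 2 * (A + C / (N : ℝ) ^ 2) := by
    field_simp
  rw [hsplit, Real.mul_rpow (by positivity) (by positivity)]
  have e : ((N : ℝ) ^ 2) ^ (-(1/2) : ℝ) = (N : ℝ)⁻¹ := by
    rw [← Real.rpow_natCast (N:ℝ) 2, ← Real.rpow_mul hx.le]
    norm_num [Real.rpow_neg_one]
  rw [e]
  field_simp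

private lemma tsum_bound (hA : 0 < A) (hC : 0 < C) :
    |(∑' n : ℤ, (A * (n : ℝ) ^ 2 + C) ^ (-(3/2) : ℝ)) - 2 * (A ^ (-(1/2) : ℝ) / C)|
      ≤ C ^ (-(3/2) : ℝ) := by
  set fr : ℝ → ℝ := fun x => (A * x ^ 2 + C) ^ (-(3/2) : ℝ) with hfr
  set Gr : ℝ → ℝ := fun x => x * (A * x ^ 2 + C) ^ (-(1/2) : ℝ) / C with hGr
  set L : ℝ := A ^ (-(1/2) : ℝ) / C with hL
  have hfr_nonneg : ∀ x : ℝ, 0 ≤ fr x := fun x => Real.rpow_nonneg (by positivity) _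
  have hG0 : Gr 0 = 0 := by simp [hGr]
  -- telescoping bounds on partial sums
  have htel : ∀ N : ℕ, ∑ i ∈ Finset.range N, (Gr ((i : ℝ) + 1) - Gr i) = Gr N := by
    intro N
    have h := Finset.sum_range_sub (fun i : ℕ => Gr i) N
    push_cast at h ⊢
    rw [h]
    norm_num [hG0]
  have hub : ∀ N : ℕ, ∑ i ∈ Finset.range N, fr ((i : ℝ) + 1) ≤ L := by
    intro N
    calc ∑ i ∈ Finset.range N, fr ((i : ℝ) + 1)
        ≤ ∑ i ∈ Finset.range N, (Gr ((i : ℝ) + 1) - Gr i) :=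
          Finset.sum_le_sum fun i _ => (step_bounds hA hC i).1
      _ = Gr N := htel N
      _ ≤ L := G_le_L hA hC (Nat.cast_nonneg N)
  have hlb : ∀ N : ℕ, Gr N ≤ ∑ i ∈ Finset.range N, fr i := by
    intro N
    rw [← htel N]
    exact Finset.sum_le_sum fun i _ => (step_bounds hA hC i).2
  have hS1 : Summable (fun n : ℕ => fr ((n : ℝ) + 1)) :=
    summable_of_sum_range_le (fun n => hfr_nonneg _) hub
  have hS0 : Summable (fun n : ℕ => fr n) := by
    rw [← summable_nat_add_iff 1]
    exact hS1.congr fun n => by push_cast; ring_nf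
  set T : ℝ := ∑' n : ℕ, fr ((n : ℝ) + 1) with hT
  have hT_ub : T ≤ L := Real.tsum_le_of_sum_range_le (fun n => hfr_nonneg _) hub
  have hfulleq : (∑' n : ℕ, fr n) = fr 0 + T := by
    rw [Summable.tsum_eq_zero_add hS0, hT]
    push_cast
    norm_num
  have hL_le : L ≤ ∑' n : ℕ, fr n :=
    le_of_tendsto' (G_tendsto hA hC) fun N =>
      (hlb N).trans (Summable.sum_le_tsum (Finset.range N) (fun i _ => hfr_nonneg _) hS0)
  have hT_lb : L - fr 0 ≤ T := by rw [hfulleq] at hL_le; linarith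
  -- integer sum
  set F : ℤ → ℝ := fun n => (A * (n : ℝ) ^ 2 + C) ^ (-(3/2) : ℝ) with hF
  have hnat : ∀ n : ℕ, F n = fr n := fun n => by simp [hF, hfr]
  have hneg : ∀ n : ℕ, F (-(n + 1)) = fr ((n : ℝ) + 1) := fun n => by
    simp only [hF, hfr]
    push_cast
    ring_nf
  have hSnat : Summable (fun n : ℕ => F n) := hS0.congr fun n => (hnat n).symm
  have hSneg : Summable (fun n : ℕ => F (-(n + 1))) := hS1.congr fun n => (hneg n).symm
  have hsplit : (∑' n : ℤ, F n) = (fr 0 + T) + T := by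
    have e1 : (∑' n : ℕ, F n) = fr 0 + T := (tsum_congr fun n => hnat n).trans hfulleq
    have e2 : (∑' n : ℕ, F (-(n + 1))) = T := by
      rw [hT]; exact tsum_congr fun n => hneg n
    rw [tsum_of_nat_of_neg_add_one hSnat hSneg, e1, e2]
  have hfr0 : fr 0 = C ^ (-(3/2) : ℝ) := by simp [hfr]
  have : (∑' n : ℤ, F n) - 2 * L = fr 0 + 2 * T - 2 * L := by rw [hsplit]; ring
  rw [this, abs_le]
  constructor
  · linarith [hT_lb]
  · linarith [hT_ub, hfr_nonneg 0]

/-- For positive reals `A`, `B` and `S_k = ∑_{n ∈ ℤ} (A·n² + B·k²)^{-3/2}`,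
the quantity `k² · S_k` tends to `2/(B·√A)` as the integer `k → +∞`. -/
theorem k_sq_mul_Sk_tendsto (A B : ℝ) (hA : 0 < A) (hB : 0 < B) :
    Tendsto (fun k : ℤ =>
        (k : ℝ) ^ 2 * ∑' n : ℤ, (A * (n : ℝ) ^ 2 + B * (k : ℝ) ^ 2) ^ (-(3 / 2) : ℝ))
      atTop (nhds (2 / (B * Real.sqrt A))) := by
  rw [tendsto_iff_norm_sub_tendsto_zero]
  apply squeeze_zero' (Eventually.of_forall fun k => norm_nonneg _)
    (g := fun k : ℤ => B ^ (-(3/2) : ℝ) * ((k : ℝ))⁻¹)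
  · filter_upwards [eventually_ge_atTop (1 : ℤ)] with k hk
    have hk0 : (0:ℝ) < (k : ℝ) := by exact_mod_cast hk
    set kR : ℝ := (k : ℝ) with hkR
    have hC : (0:ℝ) < B * kR ^ 2 := by positivity
    set C : ℝ := B * kR ^ 2 with hCdef
    set S : ℝ := ∑' n : ℤ, (A * (n : ℝ) ^ 2 + C) ^ (-(3/2) : ℝ) with hS
    have hA12 : (0:ℝ) < A ^ ((1:ℝ)/2) := Real.rpow_pos_of_pos hA _
    have e0 : 2 / (B * Real.sqrt A) = kR ^ 2 * (2 * (A ^ (-(1/2) : ℝ) / C)) := by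
      rw [Real.sqrt_eq_rpow, show (-(1/2) : ℝ) = -(1/2 : ℝ) by norm_num,
        Real.rpow_neg hA.le]
      rw [hCdef]
      field_simp
    have e1 : C ^ (-(3/2) : ℝ) = B ^ (-(3/2) : ℝ) * (kR ^ 2) ^ (-(3/2) : ℝ) :=
      Real.mul_rpow hB.le (sq_nonneg _)
    have e2 : (kR ^ 2) ^ (-(3/2) : ℝ) = kR ^ (-3 : ℝ) := by
      rw [← Real.rpow_natCast kR 2, ← Real.rpow_mul hk0.le]
      norm_num
    have e3 : kR ^ 2 * kR ^ (-3 : ℝ) = kR⁻¹ := by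
      rw [← Real.rpow_natCast kR 2, ← Real.rpow_add hk0]
      norm_num [Real.rpow_neg_one]
    calc ‖kR ^ 2 * S - 2 / (B * Real.sqrt A)‖
        = kR ^ 2 * |S - 2 * (A ^ (-(1/2) : ℝ) / C)| := by
          rw [Real.norm_eq_abs, e0, ← mul_sub, abs_mul, abs_of_nonneg (sq_nonneg kR)]
      _ ≤ kR ^ 2 * C ^ (-(3/2) : ℝ) :=
          mul_le_mul_of_nonneg_left (tsum_bound hA hC) (sq_nonneg _)
      _ = B ^ (-(3/2) : ℝ) * (kR ^ 2 * kR ^ (-3 : ℝ)) := by rw [e1, e2]; ring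
      _ = B ^ (-(3/2) : ℝ) * kR⁻¹ := by rw [e3]
  · have h1 : Tendsto (fun k : ℤ => ((k : ℝ))⁻¹) atTop (nhds 0) :=
      (tendsto_intCast_atTop_atTop (R := ℝ)).inv_tendsto_atTop
    simpa using h1.const_mul (B ^ (-(3/2) : ℝ))
end

section
/- Let Q : ℝ → ℝ, let ω̃ be a nonzero real number, let A, B ∈ ℂ, and let φ : ℝ → ℂ be twice differentiable with φ''(x) = Q(x)·φ(x) for all x ∈ ℝ. Suppose that as x → −∞ one has φ(x) − (A·e^{iω̃x} + B·e^{−iω̃x}) → 0 and φ'(x) − (iω̃·A·e^{iω̃x} − iω̃·B·e^{−iω̃x}) → 0, and that as x → +∞ one has φ(x) → 0 and φ'(x) → 0. Then ‖A‖ = ‖B‖. (A bound state mode is never superradiant: all flux coming from the horizon is reflected back.) -/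
open Filter Complex

private lemma keyIm (ω x : ℝ) (A B : ℂ) :
    ((starRingEnd ℂ) (A * Complex.exp (Complex.I * ω * x)
          + B * Complex.exp (-(Complex.I * ω * x))) *
      (Complex.I * ω * A * Complex.exp (Complex.I * ω * x)
          - Complex.I * ω * B * Complex.exp (-(Complex.I * ω * x)))).im
    = ω * (‖A‖^2 - ‖B‖^2) := by
  have h1 : Complex.I * ω * x = ((ω*x : ℝ) : ℂ) * Complex.I := by push_cast; ring
  rw [h1]
  have h2 : -(((ω*x : ℝ) : ℂ) * Complex.I) = ((-(ω*x) : ℝ) : ℂ) * Complex.I := by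
    push_cast; ring
  rw [h2, Complex.exp_mul_I, Complex.exp_mul_I, ← Complex.ofReal_cos, ← Complex.ofReal_sin,
    ← Complex.ofReal_cos, ← Complex.ofReal_sin, Real.cos_neg, Real.sin_neg]
  set c := Real.cos (ω*x) with hc
  set s := Real.sin (ω*x) with hs
  have hcs : s^2 + c^2 = 1 := Real.sin_sq_add_cos_sq (ω*x)
  simp [Complex.ext_iff, Complex.mul_im, Complex.mul_re, Complex.add_im, Complex.add_re,
    Complex.sq_norm, Complex.normSq_apply]
  linear_combination (ω * (A.re*A.re + A.im*A.im - B.re*B.re - B.im*B.im)) * hcs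

private lemma exp_norm_one (ω x : ℝ) : ‖Complex.exp (Complex.I * ω * x)‖ = 1 := by
  rw [Complex.norm_exp]
  simp [Complex.mul_re]

private lemma exp_norm_one' (ω x : ℝ) : ‖Complex.exp (-(Complex.I * ω * x))‖ = 1 := by
  rw [Complex.norm_exp]
  simp [Complex.mul_re]

/-- A bound state mode is never superradiant: if `φ'' = Q·φ` with `Q` real,
`φ` behaves like `A·e^{iω̃x} + B·e^{−iω̃x}` as `x → −∞` and decays (together
with its derivative) as `x → +∞`, then `‖A‖ = ‖B‖`. -/
theorem bound_state_not_superradiant (Q : ℝ → ℝ) (ω : ℝ) (hω : ω ≠ 0)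
    (A B : ℂ) (φ φ' : ℝ → ℂ)
    (hφ : ∀ x : ℝ, HasDerivAt φ (φ' x) x)
    (hφ' : ∀ x : ℝ, HasDerivAt φ' ((Q x : ℂ) * φ x) x)
    (h₁ : Tendsto (fun x : ℝ =>
        φ x - (A * Complex.exp (Complex.I * ω * x)
          + B * Complex.exp (-(Complex.I * ω * x)))) atBot (nhds 0))
    (h₂ : Tendsto (fun x : ℝ =>
        φ' x - (Complex.I * ω * A * Complex.exp (Complex.I * ω * x)
          - Complex.I * ω * B * Complex.exp (-(Complex.I * ω * x)))) atBot (nhds 0))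
    (h₃ : Tendsto φ atTop (nhds 0))
    (h₄ : Tendsto φ' atTop (nhds 0)) :
    ‖A‖ = ‖B‖ := by
  set g : ℝ → ℂ := fun x => A * Complex.exp (Complex.I * ω * x)
      + B * Complex.exp (-(Complex.I * ω * x)) with hg
  set g' : ℝ → ℂ := fun x => Complex.I * ω * A * Complex.exp (Complex.I * ω * x)
      - Complex.I * ω * B * Complex.exp (-(Complex.I * ω * x)) with hg'
  set W : ℝ → ℝ := fun x => ((starRingEnd ℂ) (φ x) * φ' x).im with hWdef
  -- derivative of conj ∘ φ
  have hconj : ∀ x : ℝ, HasDerivAt (fun y => (starRingEnd ℂ) (φ y))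
      ((starRingEnd ℂ) (φ' x)) x := by
    intro x
    have := (Complex.conjCLE.toContinuousLinearMap.hasFDerivAt
      (x := φ x)).comp_hasDerivAt x (hφ x)
    exact this
  -- W has derivative 0 everywhere
  have hW : ∀ x : ℝ, HasDerivAt W 0 x := by
    intro x
    have h1 : HasDerivAt (fun y => (starRingEnd ℂ) (φ y) * φ' y)
        ((starRingEnd ℂ) (φ' x) * φ' x + (starRingEnd ℂ) (φ x) * ((Q x : ℂ) * φ x)) x :=
      (hconj x).mul (hφ' x)
    have h2 := (Complex.imCLM.hasFDerivAt
      (x := (starRingEnd ℂ) (φ x) * φ' x)).comp_hasDerivAt x h1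
    have hval : Complex.imCLM ((starRingEnd ℂ) (φ' x) * φ' x
        + (starRingEnd ℂ) (φ x) * ((Q x : ℂ) * φ x)) = 0 := by
      simp [Complex.add_im, Complex.mul_im, Complex.mul_re]
      ring
    rw [hval] at h2
    exact h2
  -- W is constant
  have hconst : ∀ x : ℝ, W x = W 0 :=
    fun x => is_const_of_deriv_eq_zero (fun y => (hW y).differentiableAt)
      (fun y => (hW y).deriv) x 0
  -- limit at +∞ : W → 0
  have hTop : Tendsto W atTop (nhds 0) := by
    have hc : Tendsto (fun x => (starRingEnd ℂ) (φ x)) atTop (nhds 0) := by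
      have := (Complex.continuous_conj.tendsto (0 : ℂ)).comp h₃
      simpa [Function.comp_def] using this
    have hm : Tendsto (fun x => (starRingEnd ℂ) (φ x) * φ' x) atTop (nhds 0) := by
      have := hc.mul h₄
      simpa using this
    have := (Complex.continuous_im.tendsto (0 : ℂ)).comp hm
    simpa [hWdef, Function.comp_def, Complex.mul_im] using this
  have hW0 : W 0 = 0 := by
    have h5 : Tendsto (fun _ : ℝ => W 0) atTop (nhds 0) := hTop.congr (fun x => hconst x)
    exact (tendsto_nhds_unique h5 tendsto_const_nhds).symm
  -- bounds for g and g'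
  have hgb : ∀ x : ℝ, ‖g x‖ ≤ ‖A‖ + ‖B‖ := by
    intro x
    calc ‖g x‖ ≤ ‖A * Complex.exp (Complex.I * ω * x)‖
        + ‖B * Complex.exp (-(Complex.I * ω * x))‖ := norm_add_le _ _
    _ = ‖A‖ + ‖B‖ := by rw [norm_mul, norm_mul, exp_norm_one, exp_norm_one']; ring
  have hgb' : ∀ x : ℝ, ‖g' x‖ ≤ |ω| * ‖A‖ + |ω| * ‖B‖ := by
    intro x
    calc ‖g' x‖ ≤ ‖Complex.I * ω * A * Complex.exp (Complex.I * ω * x)‖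
        + ‖Complex.I * ω * B * Complex.exp (-(Complex.I * ω * x))‖ := norm_sub_le _ _
    _ = |ω| * ‖A‖ + |ω| * ‖B‖ := by
        rw [norm_mul, norm_mul, norm_mul, norm_mul, norm_mul, norm_mul, exp_norm_one,
          exp_norm_one']
        simp
  -- φ is eventually bounded at -∞
  have hφbdd : IsBoundedUnder (· ≤ ·) atBot ((‖·‖) ∘ fun x => (starRingEnd ℂ) (φ x)) := by
    have hev : ∀ᶠ x in atBot, ‖φ x - g x‖ ≤ 1 := by
      have := h₁.norm
      simp only [norm_zero] at this
      exact this.eventually_le_const one_pos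
    refine ⟨1 + (‖A‖ + ‖B‖), Filter.eventually_map.2 ?_⟩
    filter_upwards [hev] with x hx
    have h7 : ‖φ x‖ ≤ ‖φ x - g x‖ + ‖g x‖ := by
      calc ‖φ x‖ = ‖(φ x - g x) + g x‖ := by rw [sub_add_cancel]
      _ ≤ ‖φ x - g x‖ + ‖g x‖ := norm_add_le _ _
    have h8 : ‖(starRingEnd ℂ) (φ x)‖ = ‖φ x‖ := RCLike.norm_conj _
    calc ((‖·‖) ∘ fun x => (starRingEnd ℂ) (φ x)) x = ‖φ x‖ := h8
    _ ≤ ‖φ x - g x‖ + ‖g x‖ := h7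
    _ ≤ 1 + (‖A‖ + ‖B‖) := add_le_add hx (hgb x)
  -- the correction term tends to 0 at -∞
  have hcorr : Tendsto (fun x => (starRingEnd ℂ) (φ x - g x) * g' x
      + (starRingEnd ℂ) (φ x) * (φ' x - g' x)) atBot (nhds 0) := by
    have t1 : Tendsto (fun x => (starRingEnd ℂ) (φ x - g x) * g' x) atBot (nhds 0) := by
      have hc : Tendsto (fun x => (starRingEnd ℂ) (φ x - g x)) atBot (nhds 0) := by
        have := (Complex.continuous_conj.tendsto (0 : ℂ)).comp h₁
        simpa [Function.comp_def, hg, map_sub] using this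
      exact hc.zero_mul_isBoundedUnder_le
        (isBoundedUnder_of ⟨|ω| * ‖A‖ + |ω| * ‖B‖, fun x => hgb' x⟩)
    have t2 : Tendsto (fun x => (starRingEnd ℂ) (φ x) * (φ' x - g' x)) atBot (nhds 0) :=
      Filter.isBoundedUnder_le_mul_tendsto_zero hφbdd h₂
    have := t1.add t2
    simpa using this
  -- limit of W at -∞
  have hBot : Tendsto W atBot (nhds (ω * (‖A‖^2 - ‖B‖^2))) := by
    have hdecomp : ∀ x : ℝ, W x = ω * (‖A‖^2 - ‖B‖^2)
        + ((starRingEnd ℂ) (φ x - g x) * g' x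
          + (starRingEnd ℂ) (φ x) * (φ' x - g' x)).im := by
      intro x
      have hring : (starRingEnd ℂ) (φ x) * φ' x = (starRingEnd ℂ) (g x) * g' x
          + ((starRingEnd ℂ) (φ x - g x) * g' x
            + (starRingEnd ℂ) (φ x) * (φ' x - g' x)) := by
        rw [map_sub]; ring
      have := congrArg Complex.im hring
      rw [Complex.add_im] at this
      rw [hWdef]
      simp only []
      rw [this, keyIm ω x A B]
    have him : Tendsto (fun x => ((starRingEnd ℂ) (φ x - g x) * g' x
        + (starRingEnd ℂ) (φ x) * (φ' x - g' x)).im) atBot (nhds 0) := by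
      have := (Complex.continuous_im.tendsto (0 : ℂ)).comp hcorr
      simpa [Function.comp_def] using this
    have := him.const_add (ω * (‖A‖^2 - ‖B‖^2))
    rw [add_zero] at this
    exact this.congr (fun x => (hdecomp x).symm)
  -- conclude
  have hBot' : Tendsto W atBot (nhds 0) := by
    have h5 : Tendsto (fun _ : ℝ => W 0) atBot (nhds (W 0)) := tendsto_const_nhds
    have h6 : Tendsto W atBot (nhds (W 0)) := h5.congr (fun x => (hconst x).symm)
    rwa [hW0] at h6
  have hz : ω * (‖A‖^2 - ‖B‖^2) = 0 := tendsto_nhds_unique hBot hBot'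
  have hsq : ‖A‖^2 = ‖B‖^2 := by
    have := mul_eq_zero.mp hz
    rcases this with h | h
    · exact absurd h hω
    · linarith
  exact (sq_eq_sq₀ (norm_nonneg A) (norm_nonneg B)).mp hsq
end

section
/- Let Q : ℝ → ℝ, let ω_H and ω_∞ be real numbers, let A, B, C, D ∈ ℂ, and let φ : ℝ → ℂ be twice differentiable with φ''(x) = Q(x)·φ(x) for all x ∈ ℝ. Suppose that as x → −∞ one has φ(x) − (A·e^{iω_H x} + B·e^{−iω_H x}) → 0 and φ'(x) − iω_H·(A·e^{iω_H x} − B·e^{−iω_H x}) → 0, and that as x → +∞ one has φ(x) − (C·e^{iω_∞ x} + D·e^{−iω_∞ x}) → 0 and φ'(x) − iω_∞·(C·e^{iω_∞ x} − D·e^{−iω_∞ x}) → 0. Then ω_∞·(‖C‖² − ‖D‖²) = ω_H·(‖A‖² − ‖B‖²). -/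
open Filter

section Aux
open Complex

private lemma plane_im (ω : ℝ) (A B : ℂ) (x : ℝ) :
    ((starRingEnd ℂ) (A * Complex.exp (Complex.I * ω * x) + B * Complex.exp (-(Complex.I * ω * x))) *
     (Complex.I * ω * (A * Complex.exp (Complex.I * ω * x) - B * Complex.exp (-(Complex.I * ω * x))))).im
    = ω * (‖A‖ ^ 2 - ‖B‖ ^ 2) := by
  have h1 : Complex.I * ω * x = ((ω*x : ℝ) : ℂ) * Complex.I := by push_cast; ring
  have h2 : -(Complex.I * ω * x) = ((-(ω*x) : ℝ) : ℂ) * Complex.I := by push_cast; ring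
  rw [h2, h1, Complex.exp_mul_I, Complex.exp_mul_I]
  simp only [Complex.sq_norm, Complex.normSq_apply,
    Complex.cos_ofReal_re, Complex.sin_ofReal_re, ← Complex.ofReal_cos, ← Complex.ofReal_sin,
    Real.cos_neg, Real.sin_neg]
  simp only [Complex.add_im, Complex.mul_im, Complex.mul_re, Complex.I_re, Complex.I_im,
    Complex.ofReal_re, Complex.ofReal_im, Complex.conj_re, Complex.conj_im, Complex.sub_re,
    Complex.sub_im, Complex.add_re, Complex.neg_im, Complex.neg_re, map_add, map_mul, map_sub]
  linear_combination (ω * (A.re^2 + A.im^2 - B.re^2 - B.im^2)) * Real.sin_sq_add_cos_sq (ω*x)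

private lemma norm_plane_le (ω : ℝ) (A B : ℂ) (x : ℝ) :
    ‖A * Complex.exp (Complex.I * ω * x) + B * Complex.exp (-(Complex.I * ω * x))‖ ≤ ‖A‖ + ‖B‖ := by
  have e1 : ‖Complex.exp (Complex.I * ω * x)‖ = 1 := by
    rw [Complex.norm_exp]; simp [Complex.mul_re]
  have e2 : ‖Complex.exp (-(Complex.I * ω * x))‖ = 1 := by
    rw [Complex.norm_exp]; simp [Complex.mul_re]
  calc ‖A * Complex.exp (Complex.I * ω * x) + B * Complex.exp (-(Complex.I * ω * x))‖
      ≤ ‖A * Complex.exp (Complex.I * ω * x)‖ + ‖B * Complex.exp (-(Complex.I * ω * x))‖ :=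
        norm_add_le _ _
    _ = ‖A‖ + ‖B‖ := by rw [norm_mul, norm_mul, e1, e2, mul_one, mul_one]

private lemma wronskian_tendsto (l : Filter ℝ) (ω : ℝ) (A B : ℂ) (φ φ' : ℝ → ℂ)
    (h1 : Tendsto (fun x : ℝ =>
        φ x - (A * Complex.exp (Complex.I * ω * x)
          + B * Complex.exp (-(Complex.I * ω * x)))) l (nhds 0))
    (h2 : Tendsto (fun x : ℝ =>
        φ' x - Complex.I * ω * (A * Complex.exp (Complex.I * ω * x)
          - B * Complex.exp (-(Complex.I * ω * x)))) l (nhds 0)) :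
    Tendsto (fun x : ℝ => ((starRingEnd ℂ) (φ x) * φ' x).im) l
      (nhds (ω * (‖A‖ ^ 2 - ‖B‖ ^ 2))) := by
  set ψ : ℝ → ℂ := fun x => A * Complex.exp (Complex.I * ω * x)
      + B * Complex.exp (-(Complex.I * ω * x)) with hψ
  set ψ' : ℝ → ℂ := fun x => Complex.I * ω * (A * Complex.exp (Complex.I * ω * x)
      - B * Complex.exp (-(Complex.I * ω * x))) with hψ'
  set r : ℝ → ℂ := fun x => φ x - ψ x with hr
  set s : ℝ → ℂ := fun x => φ' x - ψ' x with hs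
  have hψb : ∀ x, ‖ψ x‖ ≤ ‖A‖ + ‖B‖ := fun x => norm_plane_le ω A B x
  have hψ'b : ∀ x, ‖ψ' x‖ ≤ |ω| * (‖A‖ + ‖B‖) := by
    intro x
    have : ‖ψ' x‖ = ‖Complex.I * ω‖ * ‖A * Complex.exp (Complex.I * ω * x)
        - B * Complex.exp (-(Complex.I * ω * x))‖ := by rw [hψ']; simp [norm_mul]
    rw [this]
    have e1 : ‖Complex.exp (Complex.I * ω * x)‖ = 1 := by
      rw [Complex.norm_exp]; simp [Complex.mul_re]
    have e2 : ‖Complex.exp (-(Complex.I * ω * x))‖ = 1 := by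
      rw [Complex.norm_exp]; simp [Complex.mul_re]
    have hn : ‖Complex.I * (ω:ℂ)‖ = |ω| := by simp [norm_mul]
    rw [hn]
    gcongr
    calc ‖A * Complex.exp (Complex.I * ω * x) - B * Complex.exp (-(Complex.I * ω * x))‖
        ≤ ‖A * Complex.exp (Complex.I * ω * x)‖ + ‖B * Complex.exp (-(Complex.I * ω * x))‖ :=
          norm_sub_le _ _
      _ = ‖A‖ + ‖B‖ := by rw [norm_mul, norm_mul, e1, e2, mul_one, mul_one]
  -- error term
  have hE : Tendsto (fun x => (starRingEnd ℂ) (ψ x) * s x + (starRingEnd ℂ) (r x) * ψ' x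
      + (starRingEnd ℂ) (r x) * s x) l (nhds 0) := by
    have hr0 : Tendsto (fun x => ‖r x‖) l (nhds 0) := by
      simpa using h1.norm
    have hs0 : Tendsto (fun x => ‖s x‖) l (nhds 0) := by
      simpa using h2.norm
    have hg : Tendsto (fun x => (‖A‖ + ‖B‖) * ‖s x‖ + ‖r x‖ * (|ω| * (‖A‖ + ‖B‖))
        + ‖r x‖ * ‖s x‖) l (nhds 0) := by
      have := ((hs0.const_mul (‖A‖ + ‖B‖)).add (hr0.mul_const (|ω| * (‖A‖ + ‖B‖)))).add
        (hr0.mul hs0)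
      simpa using this
    refine squeeze_zero_norm (fun x => ?_) hg
    calc ‖(starRingEnd ℂ) (ψ x) * s x + (starRingEnd ℂ) (r x) * ψ' x
          + (starRingEnd ℂ) (r x) * s x‖
        ≤ ‖(starRingEnd ℂ) (ψ x) * s x + (starRingEnd ℂ) (r x) * ψ' x‖
          + ‖(starRingEnd ℂ) (r x) * s x‖ := norm_add_le _ _
      _ ≤ (‖(starRingEnd ℂ) (ψ x) * s x‖ + ‖(starRingEnd ℂ) (r x) * ψ' x‖)
          + ‖(starRingEnd ℂ) (r x) * s x‖ := by gcongr; exact norm_add_le _ _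
      _ ≤ (‖A‖ + ‖B‖) * ‖s x‖ + ‖r x‖ * (|ω| * (‖A‖ + ‖B‖)) + ‖r x‖ * ‖s x‖ := by
          simp only [norm_mul, RCLike.norm_conj]
          gcongr <;> first | exact hψb x | exact hψ'b x
  have key : (fun x : ℝ => ((starRingEnd ℂ) (φ x) * φ' x).im)
      = fun x => ω * (‖A‖ ^ 2 - ‖B‖ ^ 2) + ((starRingEnd ℂ) (ψ x) * s x
        + (starRingEnd ℂ) (r x) * ψ' x + (starRingEnd ℂ) (r x) * s x).im := by
    funext x
    have hφx : φ x = ψ x + r x := by rw [hr]; ring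
    have hφ'x : φ' x = ψ' x + s x := by rw [hs]; ring
    rw [hφx, hφ'x]
    have : (starRingEnd ℂ) (ψ x + r x) * (ψ' x + s x)
        = (starRingEnd ℂ) (ψ x) * ψ' x + ((starRingEnd ℂ) (ψ x) * s x
          + (starRingEnd ℂ) (r x) * ψ' x + (starRingEnd ℂ) (r x) * s x) := by
      rw [map_add]; ring
    rw [this, Complex.add_im, plane_im ω A B x]
  rw [key]
  have := (Complex.continuous_im.tendsto 0).comp hE
  simpa using (tendsto_const_nhds (x := ω * (‖A‖ ^ 2 - ‖B‖ ^ 2)) (f := l)).add this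

end Aux

/-- The Wronskian flux relation for scattering off a real potential:
if `φ'' = Q·φ` with `Q` real-valued, `φ ~ A·e^{iω_H x} + B·e^{−iω_H x}` as
`x → −∞` and `φ ~ C·e^{iω_∞ x} + D·e^{−iω_∞ x}` as `x → +∞` (with matching
derivatives), then `ω_∞·(‖C‖² − ‖D‖²) = ω_H·(‖A‖² − ‖B‖²)`. -/
theorem scattering_flux_relation (Q : ℝ → ℝ) (ωH ωI : ℝ) (A B C D : ℂ)
    (φ φ' : ℝ → ℂ)
    (hφ : ∀ x : ℝ, HasDerivAt φ (φ' x) x)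
    (hφ' : ∀ x : ℝ, HasDerivAt φ' ((Q x : ℂ) * φ x) x)
    (h₁ : Tendsto (fun x : ℝ =>
        φ x - (A * Complex.exp (Complex.I * ωH * x)
          + B * Complex.exp (-(Complex.I * ωH * x)))) atBot (nhds 0))
    (h₂ : Tendsto (fun x : ℝ =>
        φ' x - Complex.I * ωH * (A * Complex.exp (Complex.I * ωH * x)
          - B * Complex.exp (-(Complex.I * ωH * x)))) atBot (nhds 0))
    (h₃ : Tendsto (fun x : ℝ =>
        φ x - (C * Complex.exp (Complex.I * ωI * x)
          + D * Complex.exp (-(Complex.I * ωI * x)))) atTop (nhds 0))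
    (h₄ : Tendsto (fun x : ℝ =>
        φ' x - Complex.I * ωI * (C * Complex.exp (Complex.I * ωI * x)
          - D * Complex.exp (-(Complex.I * ωI * x)))) atTop (nhds 0)) :
    ωI * (‖C‖ ^ 2 - ‖D‖ ^ 2) = ωH * (‖A‖ ^ 2 - ‖B‖ ^ 2) := by
  set W : ℝ → ℝ := fun x => ((starRingEnd ℂ) (φ x) * φ' x).im with hW
  have hWd : ∀ x, HasDerivAt W 0 x := by
    intro x
    have hc : HasDerivAt (fun x => (starRingEnd ℂ) (φ x)) ((starRingEnd ℂ) (φ' x)) x :=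
      (hφ x).star
    have hm := hc.mul (hφ' x)
    have him := Complex.imCLM.hasFDerivAt.comp_hasDerivAt x hm
    have h0 : ((starRingEnd ℂ) (φ' x) * φ' x
        + (starRingEnd ℂ) (φ x) * ((Q x : ℂ) * φ x)).im = 0 := by
      simp only [Complex.add_im, Complex.mul_im, Complex.conj_re, Complex.conj_im,
        Complex.ofReal_re, Complex.ofReal_im, Complex.mul_re]
      ring
    simpa [h0, hW, Function.comp_def, Pi.mul_def] using him
  have hWconst : ∀ x, W x = W 0 := by
    intro x
    exact is_const_of_deriv_eq_zero (fun y => (hWd y).differentiableAt)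
      (fun y => (hWd y).deriv) x 0
  have hT : Tendsto W atTop (nhds (ωI * (‖C‖ ^ 2 - ‖D‖ ^ 2))) :=
    wronskian_tendsto atTop ωI C D φ φ' h₃ h₄
  have hB : Tendsto W atBot (nhds (ωH * (‖A‖ ^ 2 - ‖B‖ ^ 2))) :=
    wronskian_tendsto atBot ωH A B φ φ' h₁ h₂
  have hWc : W = fun _ => W 0 := funext hWconst
  rw [hWc] at hT hB
  have e1 : W 0 = ωI * (‖C‖ ^ 2 - ‖D‖ ^ 2) := tendsto_nhds_unique tendsto_const_nhds hT
  have e2 : W 0 = ωH * (‖A‖ ^ 2 - ‖B‖ ^ 2) := tendsto_nhds_unique tendsto_const_nhds hB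
  rw [← e1, e2]
end

section
/- Work in units ℓ = 1. Fix real parameters ν, r₊, r₋ with ν > 1 and r₊ > r₋ ≥ 0 and r₊ > 0, fix ω, m ∈ ℝ and k ∈ ℤ, and set s = √((ν²+3)·r₊·r₋). Let R(r) = √(R²(r)) and N(r) = √(N²(r)) with R²(r) = (r/4)·(3(ν²−1)r + (ν²+3)(r₊+r₋) − 4νs), N²(r) = (ν²+3)(r−r₊)(r−r₋)/(4R²(r)), N^θ(r) = (2νr − s)/(2R²(r)), and define the effective potential V(r) = ω² − (ω + k·N^θ(r))² + 2N(r)³·( R(r)·N(r)·R''(r) + (1/2)·N(r)·R'(r)² + 2·R(r)·R'(r)·N'(r) ) + N(r)²·( m² + k²/R²(r) ), where primes denote derivatives with respect to r. Then V(r) tends to ω_m² as r → +∞, where ω_m² = ((ν²+3)²/(12(ν²−1)))·(1 + 4m²/(ν²+3)). -/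
open Filter

private lemma quadDeriv (a b c x : ℝ) :
    HasDerivAt (fun y : ℝ => a*y^2 + b*y + c) (2*a*x + b) x := by
  have h := (((hasDerivAt_pow 2 x).const_mul a).add ((hasDerivAt_id x).const_mul b)).add_const c
  refine h.congr_deriv ?_
  ring

private lemma sqrtCompDeriv {f : ℝ → ℝ} {f' x : ℝ} (hf : HasDerivAt f f' x) (hx : f x ≠ 0) :
    HasDerivAt (fun y => Real.sqrt (f y)) (f'/(2*Real.sqrt (f x))) x := by
  have h := (Real.hasDerivAt_sqrt hx).comp x hf
  refine h.congr_deriv ?_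
  ring

private lemma quadDeriv' (a b x : ℝ) :
    HasDerivAt (fun y : ℝ => a*y^2 + b*y) (2*a*x + b) x := by
  simpa using quadDeriv a b 0 x

private lemma sqrtQuadDeriv (a b x : ℝ) (h : 0 < a*x^2 + b*x) :
    HasDerivAt (fun y : ℝ => Real.sqrt (a*y^2 + b*y))
      ((2*a*x + b)/(2*Real.sqrt (a*x^2 + b*x))) x :=
  sqrtCompDeriv (quadDeriv' a b x) h.ne'

private lemma sqrt_div_four (u : ℝ) : Real.sqrt (u/4) = Real.sqrt u / 2 := by
  rw [show u/4 = (1/4)*u by ring, Real.sqrt_mul (by norm_num) u,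
    show (1/4:ℝ) = (1/2)^2 by norm_num, Real.sqrt_sq (by norm_num)]
  ring

set_option maxHeartbeats 1000000 in
/-- The effective potential of a massive scalar field mode on the warped AdS₃
black hole tends at infinity to
`ω_m² = ((ν²+3)²/(12(ν²−1)))·(1 + 4m²/(ν²+3))`. -/
theorem wads3_effective_potential_at_infinity (ν rp rm ω m : ℝ) (k : ℤ)
    (hν : 1 < ν) (hpm : rm < rp) (hm0 : 0 ≤ rm) (hp0 : 0 < rp)
    (s : ℝ) (hs : s = Real.sqrt ((ν ^ 2 + 3) * rp * rm))
    (R2 N2 Nθ R N : ℝ → ℝ)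
    (hR2 : ∀ r, R2 r = r / 4 * (3 * (ν ^ 2 - 1) * r + (ν ^ 2 + 3) * (rp + rm) - 4 * ν * s))
    (hN2 : ∀ r, N2 r = (ν ^ 2 + 3) * (r - rp) * (r - rm) / (4 * R2 r))
    (hNθ : ∀ r, Nθ r = (2 * ν * r - s) / (2 * R2 r))
    (hR : ∀ r, R r = Real.sqrt (R2 r))
    (hN : ∀ r, N r = Real.sqrt (N2 r))
    (V : ℝ → ℝ)
    (hV : ∀ r, V r = ω ^ 2 - (ω + (k : ℝ) * Nθ r) ^ 2
      + 2 * (N r) ^ 3 * (R r * N r * deriv (deriv R) r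
        + 1 / 2 * N r * (deriv R r) ^ 2 + 2 * R r * deriv R r * deriv N r)
      + (N r) ^ 2 * (m ^ 2 + (k : ℝ) ^ 2 / R2 r)) :
    Tendsto V atTop
      (nhds ((ν ^ 2 + 3) ^ 2 / (12 * (ν ^ 2 - 1)) * (1 + 4 * m ^ 2 / (ν ^ 2 + 3)))) := by
  have hν2 : (0:ℝ) < ν^2 - 1 := by nlinarith
  have hc3 : (0:ℝ) < ν^2 + 3 := by positivity
  obtain ⟨A, hAdef⟩ : ∃ A : ℝ, A = 3*(ν^2-1) := ⟨_, rfl⟩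
  obtain ⟨B, hBdef⟩ : ∃ B : ℝ, B = (ν^2+3)*(rp+rm) - 4*ν*s := ⟨_, rfl⟩
  have hA : 0 < A := by rw [hAdef]; positivity
  have hR2' : ∀ x, R2 x = (A*x^2 + B*x)/4 := by
    intro x; rw [hR2, hAdef, hBdef]; ring
  have hN2' : ∀ x, N2 x = (ν^2+3)*(x-rp)*(x-rm)/(A*x^2+B*x) := by
    intro x; rw [hN2, hR2' x]; congr 1; ring
  have hNθ' : ∀ x, Nθ x = 2*(2*ν*x - s)/(A*x^2+B*x) := by
    intro x
    rw [hNθ, hR2' x, show (2:ℝ)*((A*x^2+B*x)/4) = (A*x^2+B*x)/2 by ring,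
      div_div_eq_mul_div]
    congr 1; ring
  have hRfun : R = fun y => Real.sqrt (A/4*y^2 + B/4*y) := by
    funext y
    rw [hR y, hR2' y, show (A*y^2+B*y)/4 = A/4*y^2 + B/4*y by ring]
  have hNfun : N = fun y => Real.sqrt ((ν^2+3)*(y-rp)*(y-rm)/(A*y^2+B*y)) := by
    funext y; rw [hN y, hN2' y]
  -- derivative of R at any good point
  have hRd : ∀ y, 0 < A*y^2+B*y →
      HasDerivAt R ((2*A*y+B)/(4*Real.sqrt (A*y^2+B*y))) y := by
    intro y hy
    have hy4 : 0 < A/4*y^2 + B/4*y := by nlinarith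
    have h1 := sqrtQuadDeriv (A/4) (B/4) y hy4
    rw [hRfun]
    have hsq : Real.sqrt (A/4*y^2 + B/4*y) = Real.sqrt (A*y^2+B*y)/2 := by
      rw [show A/4*y^2 + B/4*y = (A*y^2+B*y)/4 by ring, sqrt_div_four]
    have hspos : 0 < Real.sqrt (A*y^2+B*y) := Real.sqrt_pos.2 hy
    convert h1 using 1
    rw [hsq]
    field_simp
  -- the limit function of 1/r
  obtain ⟨W, hWdef⟩ : ∃ W : ℝ → ℝ, W = fun x =>
      ω^2 - (ω + (k:ℝ)*(2*x*(2*ν-s*x)/(A+B*x)))^2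
      + ((ν^2+3)*(1-rp*x)*(1-rm*x))^2*(4*A*(A+B*x)-(2*A+B*x)^2)/(8*(A+B*x)^3)
      + ((ν^2+3)*(1-rp*x)*(1-rm*x))^2*(2*A+B*x)^2/(16*(A+B*x)^3)
      + ((ν^2+3)*(1-rp*x)*(1-rm*x))*(2*A+B*x)*((ν^2+3)*(2-(rp+rm)*x)*(A+B*x)
          -(ν^2+3)*(1-rp*x)*(1-rm*x)*(2*A+B*x))/(4*(A+B*x)^3)
      + ((ν^2+3)*(1-rp*x)*(1-rm*x))*((A+B*x)*m^2+4*(k:ℝ)^2*x^2)/(A+B*x)^2 := ⟨_, rfl⟩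
  have hA0 : (A + B*(0:ℝ)) ≠ 0 := by simpa using hA.ne'
  have hWc : ContinuousAt W 0 := by
    rw [hWdef]
    fun_prop (disch := (simp only [mul_zero, add_zero]; positivity))
  have hlim : Tendsto (fun r : ℝ => W r⁻¹) atTop (nhds (W 0)) :=
    hWc.tendsto.comp tendsto_inv_atTop_zero
  have hW0 : W 0 = (ν ^ 2 + 3) ^ 2 / (12 * (ν ^ 2 - 1)) * (1 + 4 * m ^ 2 / (ν ^ 2 + 3)) := by
    have hA' : A ≠ 0 := hA.ne'
    simp only [hWdef, mul_zero, add_zero, zero_mul, sub_zero, mul_one, zero_div, zero_pow]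
    rw [hAdef]
    field_simp
    ring
  have hEv : ∀ᶠ r in atTop, V r = W r⁻¹ := by
    filter_upwards [eventually_gt_atTop rp, eventually_gt_atTop (|B|/A),
      eventually_gt_atTop 0] with r hrp hrB hr0
    have hrm : rm < r := lt_trans hpm hrp
    have hAB : 0 < A*r + B := by
      have h1 : |B| < r * A := (div_lt_iff₀ hA).mp hrB
      have h2 : -|B| ≤ B := neg_abs_le B
      nlinarith
    have hP : 0 < A*r^2 + B*r := by nlinarith
    have hQ : 0 < (ν^2+3)*(r-rp)*(r-rm) := by
      have h1 : 0 < r - rp := by linarith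
      have h2 : 0 < r - rm := by linarith
      positivity
    have hr : r ≠ 0 := hr0.ne'
    set sp := Real.sqrt (A*r^2+B*r) with hspdef
    have hsp : 0 < sp := Real.sqrt_pos.2 hP
    have hsp2 : sp^2 = A*r^2+B*r := Real.sq_sqrt hP.le
    have hN2r : 0 < N2 r := by rw [hN2']; exact div_pos hQ hP
    have hNr : N r = Real.sqrt ((ν^2+3)*(r-rp)*(r-rm)/(A*r^2+B*r)) := by rw [hN, hN2']
    have hsn : 0 < N r := by rw [hN]; exact Real.sqrt_pos.2 hN2r
    have hsn2 : N r^2 = (ν^2+3)*(r-rp)*(r-rm)/(A*r^2+B*r) := by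
      rw [hN, Real.sq_sqrt hN2r.le, hN2']
    have hq2 : (ν^2+3)*(r-rp)*(r-rm) = N r^2 * sp^2 := by
      rw [hsn2, hsp2]; field_simp
      rw [mul_div_cancel_right₀ _ (by nlinarith : r * A + B ≠ 0)]
    have hRr : R r = sp/2 := by
      rw [hR, hR2', sqrt_div_four, hspdef]
    -- derivative of N at r
    have hq' : HasDerivAt (fun y => (ν^2+3)*(y-rp)*(y-rm)) ((ν^2+3)*(2*r-rp-rm)) r := by
      have hfn : (fun y:ℝ => (ν^2+3)*y^2 + (-((ν^2+3)*(rp+rm)))*y + (ν^2+3)*(rp*rm))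
          = fun y => (ν^2+3)*(y-rp)*(y-rm) := by funext y; ring
      have h := quadDeriv (ν^2+3) (-((ν^2+3)*(rp+rm))) ((ν^2+3)*(rp*rm)) r
      rw [hfn] at h
      convert h using 1; ring
    have hp'd : HasDerivAt (fun y => A*y^2+B*y) (2*A*r+B) r := quadDeriv' A B r
    have hfd := hq'.div hp'd hP.ne'
    have hNd : HasDerivAt N
        ((((ν^2+3)*(2*r-rp-rm)*(A*r^2+B*r) - (ν^2+3)*(r-rp)*(r-rm)*(2*A*r+B))/(A*r^2+B*r)^2)
          /(2*Real.sqrt ((ν^2+3)*(r-rp)*(r-rm)/(A*r^2+B*r)))) r := by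
      rw [hNfun]
      exact sqrtCompDeriv hfd (ne_of_gt (div_pos hQ hP))
    -- second derivative of R at r
    have hPev : ∀ᶠ y in nhds r, 0 < A*y^2+B*y :=
      (isOpen_lt continuous_const
        (by fun_prop : Continuous fun y : ℝ => A*y^2+B*y)).mem_nhds hP
    have hdR : deriv R =ᶠ[nhds r] fun y => (2*A*y+B)/(4*Real.sqrt (A*y^2+B*y)) := by
      filter_upwards [hPev] with y hy
      exact (hRd y hy).deriv
    have hgd : HasDerivAt (fun y => (2*A*y+B)/(4*Real.sqrt (A*y^2+B*y)))
        ((4*A*(A*r^2+B*r) - (2*A*r+B)^2)/(8*(A*r^2+B*r)*sp)) r := by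
      have hnum : HasDerivAt (fun y : ℝ => 2*A*y+B) (2*A) r := by
        simpa using ((hasDerivAt_id r).const_mul (2*A)).add_const B
      have hden := (sqrtQuadDeriv A B r hP).const_mul 4
      have h := hnum.div hden (by positivity : (4*Real.sqrt (A*r^2+B*r)) ≠ 0)
      refine h.congr_deriv ?_
      rw [← hspdef, ← hsp2]
      field_simp
      ring
    have h2R : deriv (deriv R) r = (4*A*(A*r^2+B*r) - (2*A*r+B)^2)/(8*(A*r^2+B*r)*sp) := by
      rw [hdR.deriv_eq]
      exact hgd.deriv
    -- rewrite V r in explicit form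
    rw [hV r, hNθ' r, hR2' r, h2R, (hRd r hP).deriv, hNd.deriv, hRr, ← hspdef, ← hNr]
    -- rewrite W r⁻¹ in rational form in r
    have hABr : A + B*r⁻¹ ≠ 0 := by
      have h : A + B*r⁻¹ = (A*r+B)/r := by field_simp
      rw [h]; exact div_ne_zero hAB.ne' hr
    have hWr : W r⁻¹ =
        ω^2 - (ω + (k:ℝ)*(2*(2*ν*r - s)/(A*r^2+B*r)))^2
        + ((ν^2+3)*(r-rp)*(r-rm))^2*(4*A*(A*r^2+B*r)-(2*A*r+B)^2)/(8*(A*r^2+B*r)^3)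
        + ((ν^2+3)*(r-rp)*(r-rm))^2*(2*A*r+B)^2/(16*(A*r^2+B*r)^3)
        + ((ν^2+3)*(r-rp)*(r-rm))*(2*A*r+B)*((ν^2+3)*(2*r-rp-rm)*(A*r^2+B*r)
            -(ν^2+3)*(r-rp)*(r-rm)*(2*A*r+B))/(4*(A*r^2+B*r)^3)
        + ((ν^2+3)*(r-rp)*(r-rm))*((A*r^2+B*r)*m^2 + 4*(k:ℝ)^2)/(A*r^2+B*r)^2 := by
      simp only [hWdef]
      have e1 : A+B*r⁻¹ = (A*r+B)/r := by field_simp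
      have e2 : (2:ℝ)*A+B*r⁻¹ = (2*A*r+B)/r := by field_simp
      have e3 : (1:ℝ)-rp*r⁻¹ = (r-rp)/r := by rw [eq_div_iff hr]; ring_nf; field_simp
      have e4 : (1:ℝ)-rm*r⁻¹ = (r-rm)/r := by rw [eq_div_iff hr]; ring_nf; field_simp
      have e5 : (2:ℝ)-(rp+rm)*r⁻¹ = (2*r-rp-rm)/r := by
        rw [eq_div_iff hr]; ring_nf; field_simp
      have e6 : (2:ℝ)*ν-s*r⁻¹ = (2*ν*r-s)/r := by field_simp
      have hP' : A*r^2+B*r ≠ 0 := hP.ne'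
      have hAB' : A*r+B ≠ 0 := hAB.ne'
      rw [e1, e2, e3, e4, e5, e6]
      congr 1
      · congr 1
        · congr 1
          · congr 1
            · congr 2
              field_simp
            · rw [div_eq_div_iff (by positivity) (by positivity)]
              field_simp
          · rw [div_eq_div_iff (by positivity) (by positivity)]
            field_simp
        · rw [div_eq_div_iff (by positivity) (by positivity)]
          field_simp
      · rw [div_eq_div_iff (by positivity) (by positivity)]
        field_simp
    rw [hWr, hq2, ← hsp2]
    have hsp' : sp ≠ 0 := hsp.ne'
    have hsn' : N r ≠ 0 := hsn.ne'
    field_simp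
    ring
  rw [← hW0]
  exact hlim.congr' (hEv.mono fun r h => h.symm)
end

section
/- Work in units ℓ = 1. Fix real parameters ν, r₊, r₋ with ν > 1 and r₊ > r₋ ≥ 0 and r₊ > 0, fix ω, m ∈ ℝ and k ∈ ℤ, and set s = √((ν²+3)·r₊·r₋). Let R(r) = √(R²(r)) and N(r) = √(N²(r)) with R²(r) = (r/4)·(3(ν²−1)r + (ν²+3)(r₊+r₋) − 4νs), N²(r) = (ν²+3)(r−r₊)(r−r₋)/(4R²(r)), N^θ(r) = (2νr − s)/(2R²(r)), and define the effective potential V(r) = ω² − (ω + k·N^θ(r))² + 2N(r)³·( R(r)·N(r)·R''(r) + (1/2)·N(r)·R'(r)² + 2·R(r)·R'(r)·N'(r) ) + N(r)²·( m² + k²/R²(r) ), where primes denote derivatives with respect to r. Then V(r) − ω² tends to −ω̃² as r → r₊ from the right (r ∈ (r₊, ∞)), where ω̃ = ω − k·Ω_H and Ω_H = −2/(2ν·r₊ − s). -/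
open Filter

set_option maxHeartbeats 1000000

/-- Near the horizon, the effective potential of a massive scalar field mode on
the warped AdS₃ black hole satisfies `V(r) − ω² → −ω̃²` as `r → r₊⁺`, where
`ω̃ = ω − k·Ω_H` is the co-rotating frequency. -/
theorem wads3_effective_potential_at_horizon (ν rp rm ω m : ℝ) (k : ℤ)
    (hν : 1 < ν) (hpm : rm < rp) (hm0 : 0 ≤ rm) (hp0 : 0 < rp)
    (s : ℝ) (hs : s = Real.sqrt ((ν ^ 2 + 3) * rp * rm))
    (ΩH : ℝ) (hΩH : ΩH = -2 / (2 * ν * rp - s))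
    (R2 N2 Nθ R N : ℝ → ℝ)
    (hR2 : ∀ r, R2 r = r / 4 * (3 * (ν ^ 2 - 1) * r + (ν ^ 2 + 3) * (rp + rm) - 4 * ν * s))
    (hN2 : ∀ r, N2 r = (ν ^ 2 + 3) * (r - rp) * (r - rm) / (4 * R2 r))
    (hNθ : ∀ r, Nθ r = (2 * ν * r - s) / (2 * R2 r))
    (hR : ∀ r, R r = Real.sqrt (R2 r))
    (hN : ∀ r, N r = Real.sqrt (N2 r))
    (V : ℝ → ℝ)
    (hV : ∀ r, V r = ω ^ 2 - (ω + (k : ℝ) * Nθ r) ^ 2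
      + 2 * (N r) ^ 3 * (R r * N r * deriv (deriv R) r
        + 1 / 2 * N r * (deriv R r) ^ 2 + 2 * R r * deriv R r * deriv N r)
      + (N r) ^ 2 * (m ^ 2 + (k : ℝ) ^ 2 / R2 r)) :
    Tendsto (fun r => V r - ω ^ 2) (nhdsWithin rp (Set.Ioi rp))
      (nhds (-(ω - (k : ℝ) * ΩH) ^ 2)) := by
  have hν0 : (0:ℝ) < ν := by linarith
  have hs0 : 0 ≤ s := by rw [hs]; exact Real.sqrt_nonneg _
  have hs2 : s ^ 2 = (ν ^ 2 + 3) * rp * rm := by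
    rw [hs, Real.sq_sqrt]
    positivity
  have hPh : 0 < 2 * ν * rp - s := by
    have h2 : (ν ^ 2 + 3) * rp * rm < (2 * ν * rp) ^ 2 := by
      nlinarith [mul_pos (mul_pos (show (0:ℝ) < ν ^ 2 + 3 by positivity) hp0) (sub_pos.mpr hpm),
        mul_nonneg (mul_nonneg (show (0:ℝ) ≤ 3 * ν ^ 2 - 3 by nlinarith) hp0.le) hp0.le]
    have h3 : s < 2 * ν * rp := by
      rw [hs]
      calc Real.sqrt ((ν ^ 2 + 3) * rp * rm) < Real.sqrt ((2 * ν * rp) ^ 2) :=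
            Real.sqrt_lt_sqrt (by positivity) h2
        _ = 2 * ν * rp := Real.sqrt_sq (by positivity)
    linarith
  set A : ℝ := 3 * (ν ^ 2 - 1) / 4 with hA
  set B : ℝ := ((ν ^ 2 + 3) * (rp + rm) - 4 * ν * s) / 4 with hB
  have hA0 : 0 < A := by rw [hA]; nlinarith
  have hR2f : R2 = fun r => A * r ^ 2 + B * r := by
    funext r; rw [hR2, hA, hB]; ring
  have hkey : rp * (A * rp + B) = ((2 * ν * rp - s) / 2) ^ 2 := by
    rw [hA, hB]; linear_combination (-(1:ℝ)/4) * hs2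
  have hR2pos : ∀ r, rp ≤ r → 0 < R2 r := by
    intro r hr
    simp only [hR2f]
    have h1 : 0 < rp * (A * rp + B) := by rw [hkey]; positivity
    have h2 : 0 < A * rp + B := by nlinarith
    have h3 : 0 < A * r + B := by nlinarith [mul_nonneg hA0.le (sub_nonneg.mpr hr)]
    nlinarith [mul_pos (lt_of_lt_of_le hp0 hr) h3]
  have hR2ne : ∀ r, rp ≤ r → R2 r ≠ 0 := fun r hr => (hR2pos r hr).ne'
  have hR2d : ∀ r : ℝ, HasDerivAt R2 (2 * A * r + B) r := by
    intro r
    rw [hR2f]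
    have h := ((hasDerivAt_pow 2 r).const_mul A).add ((hasDerivAt_id r).const_mul B)
    exact h.congr_deriv (by norm_num; ring)
  set Pf : ℝ → ℝ := fun r => (ν ^ 2 + 3) * ((r - rp) * (r - rm)) / 4 with hPf
  have hN2f : N2 = fun r => Pf r / R2 r := by
    funext r; rw [hN2]; simp only [hPf]; ring
  have hPfd : ∀ r : ℝ, HasDerivAt Pf ((ν ^ 2 + 3) * (2 * r - rp - rm) / 4) r := by
    intro r
    have h1 : HasDerivAt (fun x : ℝ => x - rp) 1 r := (hasDerivAt_id r).sub_const rp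
    have h2 : HasDerivAt (fun x : ℝ => x - rm) 1 r := (hasDerivAt_id r).sub_const rm
    have h4 := ((h1.mul h2).const_mul ((ν:ℝ) ^ 2 + 3)).div_const 4
    rw [hPf]
    exact h4.congr_deriv (by ring)
  have hN2pos : ∀ r, rp < r → 0 < N2 r := by
    intro r hr
    rw [hN2]
    have h5 : 0 < r - rp := by linarith
    have h6 : 0 < r - rm := by linarith
    have h7 : (0:ℝ) < ν ^ 2 + 3 := by positivity
    exact div_pos (mul_pos (mul_pos h7 h5) h6) (by linarith [hR2pos r hr.le])
  have hN2d : ∀ r, rp < r → HasDerivAt N2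
      (((ν ^ 2 + 3) * (2 * r - rp - rm) / 4 * R2 r - Pf r * (2 * A * r + B)) / (R2 r) ^ 2) r := by
    intro r hr
    rw [hN2f]
    exact (hPfd r).div (hR2d r) (hR2ne r hr.le)
  have hRf : R = fun r => Real.sqrt (R2 r) := funext hR
  have hNf : N = fun r => Real.sqrt (N2 r) := funext hN
  have hsqd : ∀ r, rp ≤ r → HasDerivAt (fun x => Real.sqrt (R2 x))
      ((2 * A * r + B) / (2 * Real.sqrt (R2 r))) r :=
    fun r hr => (hR2d r).sqrt (hR2ne r hr)
  have hdR : ∀ r, rp < r → deriv R r = (2 * A * r + B) / (2 * Real.sqrt (R2 r)) := by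
    intro r hr
    rw [hRf]
    exact (hsqd r hr.le).deriv
  have hdN : ∀ r, rp < r → deriv N r =
      (((ν ^ 2 + 3) * (2 * r - rp - rm) / 4 * R2 r - Pf r * (2 * A * r + B)) / (R2 r) ^ 2)
        / (2 * Real.sqrt (N2 r)) := by
    intro r hr
    rw [hNf]
    exact (((hN2d r hr).sqrt (hN2pos r hr).ne')).deriv
  have hddR : ∀ r, rp < r → deriv (deriv R) r =
      (2 * A * (2 * Real.sqrt (R2 r)) -
        (2 * A * r + B) * (2 * ((2 * A * r + B) / (2 * Real.sqrt (R2 r)))))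
        / (2 * Real.sqrt (R2 r)) ^ 2 := by
    intro r hr
    have hev : deriv R =ᶠ[nhds r] fun x => (2 * A * x + B) / (2 * Real.sqrt (R2 x)) := by
      filter_upwards [isOpen_Ioi.mem_nhds hr] with x hx
      exact hdR x hx
    rw [hev.deriv_eq]
    have hu : HasDerivAt (fun x : ℝ => 2 * A * x + B) (2 * A) r := by
      have h := ((hasDerivAt_id r).const_mul (2 * A)).add_const B
      exact h.congr_deriv (by ring)
    have hv : HasDerivAt (fun x : ℝ => 2 * Real.sqrt (R2 x))
        (2 * ((2 * A * r + B) / (2 * Real.sqrt (R2 r)))) r := (hsqd r hr.le).const_mul 2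
    have hvne : 2 * Real.sqrt (R2 r) ≠ 0 := by
      have := Real.sqrt_pos.mpr (hR2pos r hr.le)
      positivity
    exact (hu.div hv hvne).deriv
  set F : ℝ → ℝ := fun r =>
    -(ω + (k : ℝ) * Nθ r) ^ 2
      + 2 * A * (N2 r) ^ 2
      - (N2 r) ^ 2 * (2 * A * r + B) ^ 2 / (4 * R2 r)
      + N2 r * (2 * A * r + B) *
          (((ν ^ 2 + 3) * (2 * r - rp - rm) / 4 * R2 r - Pf r * (2 * A * r + B)) / (R2 r) ^ 2)
      + N2 r * (m ^ 2 + (k : ℝ) ^ 2 / R2 r) with hF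
  have hev : (fun r => V r - ω ^ 2) =ᶠ[nhdsWithin rp (Set.Ioi rp)] F := by
    filter_upwards [self_mem_nhdsWithin] with r hr
    have hr' : rp < r := hr
    have hx2 : Real.sqrt (R2 r) ^ 2 = R2 r := Real.sq_sqrt (hR2pos r hr'.le).le
    have hy2 : Real.sqrt (N2 r) ^ 2 = N2 r := Real.sq_sqrt (hN2pos r hr').le
    have hx0 : 0 < Real.sqrt (R2 r) := Real.sqrt_pos.mpr (hR2pos r hr'.le)
    have hy0 : 0 < Real.sqrt (N2 r) := Real.sqrt_pos.mpr (hN2pos r hr')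
    simp only [hF]
    rw [hV r, hdR r hr', hddR r hr', hdN r hr', hR r, hN r]
    set x := Real.sqrt (R2 r) with hxdef
    set y := Real.sqrt (N2 r) with hydef
    clear_value x y
    rw [← hx2, ← hy2]
    have hx : x ≠ 0 := hx0.ne'
    have hy : y ≠ 0 := hy0.ne'
    field_simp
    ring
  have hcR2 : ContinuousAt R2 rp := by rw [hR2f]; fun_prop
  have hR2ne0 : R2 rp ≠ 0 := hR2ne rp le_rfl
  have hcPf : ContinuousAt Pf rp := by rw [hPf]; fun_prop
  have hcNθ : ContinuousAt Nθ rp := by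
    have h : Nθ = fun r => (2 * ν * r - s) / (2 * R2 r) := funext hNθ
    rw [h]
    exact ContinuousAt.div (by fun_prop) (continuousAt_const.mul hcR2)
      (mul_ne_zero two_ne_zero hR2ne0)
  have hcN2 : ContinuousAt N2 rp := by
    rw [hN2f]; exact hcPf.div hcR2 hR2ne0
  have hcF : ContinuousAt F rp := by
    rw [hF]
    refine ContinuousAt.add (ContinuousAt.add (ContinuousAt.sub (ContinuousAt.add ?_ ?_) ?_) ?_) ?_
    · exact ((continuousAt_const.add (continuousAt_const.mul hcNθ)).pow 2).neg
    · exact continuousAt_const.mul (hcN2.pow 2)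
    · exact ContinuousAt.div ((hcN2.pow 2).mul (by fun_prop)) (continuousAt_const.mul hcR2)
        (mul_ne_zero four_ne_zero hR2ne0)
    · refine (hcN2.mul (by fun_prop)).mul (ContinuousAt.div ?_ (hcR2.pow 2) (pow_ne_zero 2 hR2ne0))
      exact ((ContinuousAt.mul (by fun_prop) hcR2).sub (hcPf.mul (by fun_prop)))
    · exact hcN2.mul (continuousAt_const.add (ContinuousAt.div continuousAt_const hcR2 hR2ne0))
  have hN2rp : N2 rp = 0 := by rw [hN2]; simp
  have hR2rp : R2 rp = ((2 * ν * rp - s) / 2) ^ 2 := by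
    simp only [hR2f]
    linear_combination hkey
  have hFrp : F rp = -(ω - (k : ℝ) * ΩH) ^ 2 := by
    simp only [hF, hN2rp]
    rw [hNθ rp, hR2rp, hΩH]
    have h2 : 2 * ν * rp - s ≠ 0 := hPh.ne'
    field_simp
    ring
  have hlim : Tendsto F (nhdsWithin rp (Set.Ioi rp)) (nhds (F rp)) :=
    hcF.tendsto.mono_left nhdsWithin_le_nhds
  rw [← hFrp]
  exact Tendsto.congr' hev.symm hlim
end
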